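/- arXiv:1602.04912 — 8 statements merged into one kernel-verified Lean document; each statement's English description precedes it below -/
import Mathlib

section
/- Let S be a symmetric matrix in R^{S×S} and ε > 0, and define the block matrix M = [[ (ε/(1+ε))S + I , -(ε/(2(1+ε)))(S + I) ], [ I , 0 ]] ∈ R^{2S×2S}. Then λ is an eigenvalue of M if and only if there exists an eigenvalue λ_S of S such that -2(1+ε)λ² + 2(1+ε+ελ_S)λ - ε(1+λ_S) = 0. Equivalently, the eigenvalues of M come in pairs λ± = (1+ε+ελ_S ± sqrt(1+ε²(λ_S²−1)))/(2(1+ε)) over eigenvalues λ_S of S. -/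
open Matrix

lemma aux_det_eq_zero_iff {K : Type*} [Field K] {n : Type*} [Fintype n] [DecidableEq n]
    (S V W : Matrix n n K) (v : n → K) (hdec : S = V * Matrix.diagonal v * W)
    (hVW : V * W = 1) (c d : K) :
    (c • S + d • (1 : Matrix n n K)).det = 0 ↔ ∃ i, c * v i + d = 0 := by
  have hD : Matrix.diagonal (fun i => c * v i + d)
      = c • Matrix.diagonal v + d • (1 : Matrix n n K) := by
    ext i j
    rcases eq_or_ne i j with rfl | h
    · simp [Matrix.diagonal_apply, Matrix.one_apply]
    · simp [Matrix.diagonal_apply, Matrix.one_apply, h]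
  have h1 : c • S + d • (1 : Matrix n n K)
      = V * Matrix.diagonal (fun i => c * v i + d) * W := by
    rw [hD, hdec, Matrix.mul_add, Matrix.add_mul]
    congr 1
    · rw [Matrix.mul_smul, Matrix.smul_mul]
    · rw [Matrix.mul_smul, Matrix.smul_mul, Matrix.mul_one, hVW]
  have hdet : V.det * W.det = 1 := by rw [← Matrix.det_mul, hVW, Matrix.det_one]
  have h2 : (c • S + d • (1 : Matrix n n K)).det
      = (Matrix.diagonal (fun i => c * v i + d)).det := by
    rw [h1, Matrix.det_mul, Matrix.det_mul, mul_comm V.det, mul_assoc, hdet, mul_one]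
  rw [h2, Matrix.det_diagonal]
  rw [Finset.prod_eq_zero_iff]
  simp

lemma mem_spectrum_iff_det {K : Type*} [Field K] {n : Type*} [Fintype n] [DecidableEq n]
    (A : Matrix n n K) (x : K) :
    x ∈ spectrum K A ↔ (A - x • (1 : Matrix n n K)).det = 0 := by
  rw [spectrum.mem_iff, Algebra.algebraMap_eq_smul_one, ← IsUnit.neg_iff, neg_sub,
    Matrix.isUnit_iff_isUnit_det, isUnit_iff_ne_zero, not_not]

/-- eigenvalues of the ADMM block matrix `M` are characterized by the
quadratic equation `-2(1+ε)λ² + 2(1+ε+ελ_S)λ - ε(1+λ_S) = 0` over eigenvalues `λ_S` of `S`. -/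
theorem spectrum_admm_block_matrix (s : ℕ) (S : Matrix (Fin s) (Fin s) ℝ)
    (hS : S.IsSymm) (ε : ℝ) (hε : 0 < ε)
    (M : Matrix (Fin s ⊕ Fin s) (Fin s ⊕ Fin s) ℝ)
    (hM : M = Matrix.fromBlocks
      ((ε / (1 + ε)) • S + 1) (-(ε / (2 * (1 + ε))) • (S + 1)) 1 0)
    (lam : ℂ) :
    lam ∈ spectrum ℂ (M.map (Complex.ofReal ·)) ↔
      ∃ lamS : ℝ, lamS ∈ spectrum ℝ S ∧
        -2 * (1 + (ε : ℂ)) * lam ^ 2 + 2 * (1 + ε + ε * lamS) * lam - ε * (1 + lamS) = 0 := by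
  have hS' : S.IsHermitian := by
    rwa [Matrix.IsHermitian, Matrix.conjTranspose_eq_transpose_of_trivial]
  set μ : Fin s → ℝ := hS'.eigenvalues with hμ
  set U : Matrix (Fin s) (Fin s) ℝ := (hS'.eigenvectorUnitary : Matrix (Fin s) (Fin s) ℝ) with hU
  have hdec : S = U * Matrix.diagonal μ * star U := by
    have h := hS'.spectral_theorem
    rw [RCLike.ofReal_real_eq_id] at h
    simpa using h
  have hUW : U * star U = 1 :=
    Matrix.mem_unitaryGroup_iff.mp hS'.eigenvectorUnitary.2
  -- real spectrum
  have hspecS : ∀ x : ℝ, x ∈ spectrum ℝ S ↔ ∃ i, μ i = x := by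
    intro x
    rw [mem_spectrum_iff_det]
    have : S - x • (1 : Matrix (Fin s) (Fin s) ℝ)
        = (1 : ℝ) • S + (-x) • (1 : Matrix (Fin s) (Fin s) ℝ) := by
      rw [one_smul, neg_smul, sub_eq_add_neg]
    rw [this, aux_det_eq_zero_iff S U (star U) μ hdec hUW]
    constructor
    · rintro ⟨i, hi⟩; exact ⟨i, by linarith [hi]⟩
    · rintro ⟨i, hi⟩; exact ⟨i, by rw [hi]; ring⟩
  -- complex picture
  set Sc : Matrix (Fin s) (Fin s) ℂ := S.map (Complex.ofReal ·) with hSc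
  set Vc : Matrix (Fin s) (Fin s) ℂ := U.map (Complex.ofReal ·) with hVc
  set Wc : Matrix (Fin s) (Fin s) ℂ := (star U).map (Complex.ofReal ·) with hWc
  have hmapmul : ∀ (A B : Matrix (Fin s) (Fin s) ℝ),
      (A * B).map (Complex.ofReal ·) = A.map (Complex.ofReal ·) * B.map (Complex.ofReal ·) :=
    fun A B => Matrix.map_mul (f := Complex.ofRealHom)
  have hdecC : Sc = Vc * Matrix.diagonal (fun i => (μ i : ℂ)) * Wc := by
    have h := congrArg (fun X : Matrix (Fin s) (Fin s) ℝ => X.map (Complex.ofReal ·)) hdec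
    rw [hmapmul, hmapmul] at h
    rw [hSc, h, Matrix.diagonal_map (by simp)]
  have hVWc : Vc * Wc = 1 := by
    rw [hVc, hWc, ← hmapmul, hUW]
    exact Matrix.map_one _ (by simp) (by simp)
  -- block form of M over ℂ
  set ac : ℂ := (ε : ℂ) / (1 + ε) with hac
  set bc : ℂ := -((ε : ℂ) / (2 * (1 + ε))) with hbc
  set Ac : Matrix (Fin s) (Fin s) ℂ := ac • Sc + 1 with hAc
  set Bc : Matrix (Fin s) (Fin s) ℂ := bc • (Sc + 1) with hBc
  have hMc : M.map (Complex.ofReal ·) = Matrix.fromBlocks Ac Bc 1 0 := by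
    subst hM
    ext i j
    rcases i with i | i <;> rcases j with j | j <;> by_cases h : i = j <;>
      simp [Matrix.map_apply, Matrix.one_apply, h, hSc, hAc, hBc, hac, hbc]
  set c : ℂ := lam * ac + bc with hc
  set d : ℂ := lam + bc - lam ^ 2 with hd
  have h1e : (1 : ℂ) + ε ≠ 0 := by
    have h2 : ((1 + ε : ℝ) : ℂ) ≠ 0 := Complex.ofReal_ne_zero.mpr (by positivity)
    push_cast at h2
    exact h2
  have hmain : lam ∈ spectrum ℂ (M.map (Complex.ofReal ·)) ↔ ∃ i, c * (μ i : ℂ) + d = 0 := by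
    rw [mem_spectrum_iff_det, hMc]
    set X : Matrix (Fin s) (Fin s) ℂ := Ac - lam • 1 with hX
    set Y : Matrix (Fin s) (Fin s) ℂ := c • Sc + d • 1 with hY
    have hsub : Matrix.fromBlocks Ac Bc 1 0
          - lam • (1 : Matrix (Fin s ⊕ Fin s) (Fin s ⊕ Fin s) ℂ)
        = Matrix.fromBlocks X Bc 1 (-(lam • 1)) := by
      ext i j
      rcases i with i | i <;> rcases j with j | j <;> by_cases h : i = j <;>
        simp [Matrix.one_apply, h, hX]
    have hprod : Matrix.fromBlocks X Bc (1 : Matrix (Fin s) (Fin s) ℂ) (-(lam • 1)) * Matrix.fromBlocks (1 : Matrix (Fin s) (Fin s) ℂ) (lam • 1) (0 : Matrix (Fin s) (Fin s) ℂ) (1 : Matrix (Fin s) (Fin s) ℂ)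
        = Matrix.fromBlocks X Y (1 : Matrix (Fin s) (Fin s) ℂ) (0 : Matrix (Fin s) (Fin s) ℂ) := by
      have e12 : lam • X + Bc = Y := by
        rw [hX, hY, hAc, hBc, hc, hd]
        module
      rw [Matrix.fromBlocks_multiply]
      simp only [Matrix.mul_one, Matrix.mul_zero, Matrix.one_mul, Matrix.mul_smul, add_zero,
        zero_add, add_neg_cancel, neg_mul]
      rw [e12]
      norm_num
    have hdet1 : (Matrix.fromBlocks Ac Bc 1 0
          - lam • (1 : Matrix (Fin s ⊕ Fin s) (Fin s ⊕ Fin s) ℂ)).det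
        = (Matrix.fromBlocks X Y 1 0).det := by
      rw [hsub, ← hprod, Matrix.det_mul, Matrix.det_fromBlocks_zero₂₁]
      simp
    set J : Matrix (Fin s ⊕ Fin s) (Fin s ⊕ Fin s) ℂ := Matrix.fromBlocks 0 1 1 0 with hJ
    have hJJ : J * J = 1 := by
      rw [hJ, Matrix.fromBlocks_multiply, ← Matrix.fromBlocks_one]
      simp
    have hJunit : IsUnit J.det :=
      IsUnit.of_mul_eq_one _ (by rw [← Matrix.det_mul, hJJ, Matrix.det_one])
    have hJP : J * Matrix.fromBlocks X Y 1 0 = Matrix.fromBlocks 1 0 X Y := by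
      rw [hJ, Matrix.fromBlocks_multiply]
      simp
    have hdet2 : J.det * (Matrix.fromBlocks X Y 1 0).det = Y.det := by
      rw [← Matrix.det_mul, hJP, Matrix.det_fromBlocks_zero₁₂, Matrix.det_one, one_mul]
    rw [hdet1, ← hJunit.mul_right_eq_zero, hdet2, hY,
      aux_det_eq_zero_iff Sc Vc Wc _ hdecC hVWc c d]
  rw [hmain]
  have hkey : ∀ x : ℝ, -2 * (1 + (ε:ℂ)) * lam ^ 2 + 2 * (1 + ε + ε * x) * lam - ε * (1 + x)
      = (2 * (1 + (ε:ℂ))) * (c * x + d) := by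
    intro x
    rw [hc, hd, hac, hbc]
    field_simp
    ring
  have hne : (2 : ℂ) * (1 + ε) ≠ 0 := mul_ne_zero (by norm_num) h1e
  constructor
  · rintro ⟨i, hi⟩
    exact ⟨μ i, (hspecS _).mpr ⟨i, rfl⟩, by rw [hkey, hi, mul_zero]⟩
  · rintro ⟨x, hx, hqx⟩
    obtain ⟨i, hi⟩ := (hspecS x).mp hx
    rw [hkey] at hqx
    rcases mul_eq_zero.mp hqx with h | h
    · exact absurd h hne
    · exact ⟨i, by rw [hi]; exact h⟩
end

section
/- For a symmetric matrix S and ε > 0, det(M − λI) = ((−1)^S/(2(1+ε))^S) · det( ε(2λ−1)S + (2λ(1+ε)(1−λ) − ε)I ), where M = [[ (ε/(1+ε))S + I , -(ε/(2(1+ε)))(S + I) ], [ I , 0 ]]. -/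
open Matrix

/-- the characteristic determinant identity for the ADMM block matrix. -/
theorem det_admm_block_matrix (s : ℕ) (S : Matrix (Fin s) (Fin s) ℝ)
    (hS : S.IsSymm) (ε : ℝ) (hε : 0 < ε)
    (M : Matrix (Fin s ⊕ Fin s) (Fin s ⊕ Fin s) ℝ)
    (hM : M = Matrix.fromBlocks
      ((ε / (1 + ε)) • S + 1) (-(ε / (2 * (1 + ε))) • (S + 1)) 1 0)
    (lam : ℝ) :
    (M - lam • 1).det =
      ((-1) ^ s / (2 * (1 + ε)) ^ s) *
        ((ε * (2 * lam - 1)) • S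
          + (2 * lam * (1 + ε) * (1 - lam) - ε) • (1 : Matrix (Fin s) (Fin s) ℝ)).det := by
  subst hM
  have h1ε : (1 : ℝ) + ε ≠ 0 := by positivity
  set A : Matrix (Fin s) (Fin s) ℝ := (ε / (1 + ε)) • S + 1 with hA
  set B : Matrix (Fin s) (Fin s) ℝ := -(ε / (2 * (1 + ε))) • (S + 1) with hB
  -- the key identity for lam ≠ 0
  have key : ∀ l : ℝ, l ≠ 0 →
      ((Matrix.fromBlocks A B 1 0 : Matrix (Fin s ⊕ Fin s) (Fin s ⊕ Fin s) ℝ) - l • 1).det =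
      ((-1) ^ s / (2 * (1 + ε)) ^ s) *
        ((ε * (2 * l - 1)) • S
          + (2 * l * (1 + ε) * (1 - l) - ε) • (1 : Matrix (Fin s) (Fin s) ℝ)).det := by
    intro l hl
    have hblock : (Matrix.fromBlocks A B 1 0 : Matrix (Fin s ⊕ Fin s) (Fin s ⊕ Fin s) ℝ)
        - l • 1 = Matrix.fromBlocks (A - l • 1) B 1 ((-l) • 1) := by
      rw [← Matrix.fromBlocks_one (l := Fin s) (m := Fin s), Matrix.fromBlocks_smul]
      ext (i | i) (j | j) <;>
        simp [Matrix.fromBlocks, Matrix.sub_apply]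
    rw [hblock]
    have hnl : (-l : ℝ) ≠ 0 := neg_ne_zero.2 hl
    haveI : Invertible ((-l) • (1 : Matrix (Fin s) (Fin s) ℝ)) :=
      ⟨(-l)⁻¹ • 1, by
        rw [Matrix.smul_mul, Matrix.mul_smul, Matrix.one_mul, smul_smul,
          inv_mul_cancel₀ hnl, one_smul], by
        rw [Matrix.smul_mul, Matrix.mul_smul, Matrix.one_mul, smul_smul,
          mul_inv_cancel₀ hnl, one_smul]⟩
    rw [Matrix.det_fromBlocks₂₂]
    have hinv : (⅟((-l) • (1 : Matrix (Fin s) (Fin s) ℝ))) = (-l)⁻¹ • 1 := by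
      apply invOf_eq_right_inv
      rw [Matrix.smul_mul, Matrix.mul_smul, Matrix.one_mul, smul_smul,
        mul_inv_cancel₀ hnl, one_smul]
    rw [hinv]
    have hdetD : ((-l) • (1 : Matrix (Fin s) (Fin s) ℝ)).det = (-l) ^ s := by
      rw [Matrix.det_smul, Matrix.det_one]
      simp
    have hX : A - l • 1 - B * ((-l)⁻¹ • 1) * 1 = A - l • 1 - (-l)⁻¹ • B := by
      rw [Matrix.mul_smul, Matrix.mul_one, Matrix.mul_one]
    rw [hdetD, hX]
    -- pull out the factor l from the determinant
    have hfact : (l : ℝ) • (A - l • 1 - (-l)⁻¹ • B) =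
        (1 / (2 * (1 + ε))) • ((ε * (2 * l - 1)) • S
          + (2 * l * (1 + ε) * (1 - l) - ε) • (1 : Matrix (Fin s) (Fin s) ℝ)) := by
      rw [hA, hB]
      match_scalars <;> field_simp <;> ring
    have hdet1 : ((l : ℝ) • (A - l • 1 - (-l)⁻¹ • B)).det
        = l ^ s * (A - l • 1 - (-l)⁻¹ • B).det := by
      rw [Matrix.det_smul]; simp
    have hdet2 : ((1 / (2 * (1 + ε))) • ((ε * (2 * l - 1)) • S
          + (2 * l * (1 + ε) * (1 - l) - ε) • (1 : Matrix (Fin s) (Fin s) ℝ))).det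
        = (1 / (2 * (1 + ε))) ^ s * ((ε * (2 * l - 1)) • S
          + (2 * l * (1 + ε) * (1 - l) - ε) • (1 : Matrix (Fin s) (Fin s) ℝ)).det := by
      rw [Matrix.det_smul]; simp
    have heq : l ^ s * (A - l • 1 - (-l)⁻¹ • B).det
        = (1 / (2 * (1 + ε))) ^ s * ((ε * (2 * l - 1)) • S
          + (2 * l * (1 + ε) * (1 - l) - ε) • (1 : Matrix (Fin s) (Fin s) ℝ)).det := by
      rw [← hdet1, ← hdet2, hfact]
    calc (-l) ^ s * (A - l • 1 - (-l)⁻¹ • B).det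
        = (-1 : ℝ) ^ s * (l ^ s * (A - l • 1 - (-l)⁻¹ • B).det) := by
          rw [neg_pow]; ring
      _ = (-1 : ℝ) ^ s * ((1 / (2 * (1 + ε))) ^ s * ((ε * (2 * l - 1)) • S
          + (2 * l * (1 + ε) * (1 - l) - ε) • (1 : Matrix (Fin s) (Fin s) ℝ)).det) := by
          rw [heq]
      _ = ((-1) ^ s / (2 * (1 + ε)) ^ s) * ((ε * (2 * l - 1)) • S
          + (2 * l * (1 + ε) * (1 - l) - ε) • (1 : Matrix (Fin s) (Fin s) ℝ)).det := by
          rw [div_pow, one_pow]; ring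
  rcases eq_or_ne lam 0 with rfl | hlam
  · -- lam = 0 : use continuity / density of nonzero reals
    have hcontL : Continuous fun l : ℝ =>
        ((Matrix.fromBlocks A B 1 0 : Matrix (Fin s ⊕ Fin s) (Fin s ⊕ Fin s) ℝ)
          - l • 1).det := by
      apply Continuous.matrix_det
      exact continuous_const.sub (continuous_id.smul continuous_const)
    have hcontR : Continuous fun l : ℝ =>
        ((-1) ^ s / (2 * (1 + ε)) ^ s) *
          ((ε * (2 * l - 1)) • S
            + (2 * l * (1 + ε) * (1 - l) - ε) • (1 : Matrix (Fin s) (Fin s) ℝ)).det := by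
      apply Continuous.mul continuous_const
      apply Continuous.matrix_det
      apply Continuous.add
      · exact ((continuous_const.mul ((continuous_const.mul continuous_id).sub
          continuous_const)).smul continuous_const)
      · exact (((continuous_const.mul continuous_id).mul continuous_const).mul
          (continuous_const.sub continuous_id)).sub continuous_const |>.smul continuous_const
    have hdense : Dense {l : ℝ | l ≠ 0} := dense_compl_singleton 0
    have := Continuous.ext_on hdense hcontL hcontR (fun l hl => key l hl)
    exact congrFun this 0
  · exact key lam hlam
end

section
/- Let λ_S ∈ [0,1) and ε > 0 with 1 + ε²(λ_S² − 1) < 0 (complex roots). Define the common modulus |λ±(λ_S,ε)| = sqrt((1+ε+ελ_S)² − 1 − ε²(λ_S²−1)) / (2(1+ε)). Then |λ±(λ_S,ε)| > ε/(1+ε) if and only if ε < (1+λ_S)/(1−λ_S), with equality iff ε = (1+λ_S)/(1−λ_S). -/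
/-- in the complex-root regime, the common modulus compares to `ε/(1+ε)`
exactly according to the position of `ε` relative to `(1+λ_S)/(1-λ_S)`. -/
theorem modulus_vs_eps_ratio (lamS ε : ℝ) (hlam : lamS ∈ Set.Ico (0 : ℝ) 1) (hε : 0 < ε)
    (hdisc : 1 + ε ^ 2 * (lamS ^ 2 - 1) < 0) :
    (ε / (1 + ε) <
        Real.sqrt ((1 + ε + ε * lamS) ^ 2 - 1 - ε ^ 2 * (lamS ^ 2 - 1)) / (2 * (1 + ε)) ↔
      ε < (1 + lamS) / (1 - lamS)) ∧
    (Real.sqrt ((1 + ε + ε * lamS) ^ 2 - 1 - ε ^ 2 * (lamS ^ 2 - 1)) / (2 * (1 + ε)) =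
        ε / (1 + ε) ↔
      ε = (1 + lamS) / (1 - lamS)) := by
  obtain ⟨h0, h1⟩ := hlam
  have hl : 0 < 1 - lamS := by linarith
  have hpos : (0:ℝ) < 1 + ε := by linarith
  have hX : (1 + ε + ε * lamS) ^ 2 - 1 - ε ^ 2 * (lamS ^ 2 - 1) = 2 * ε * (1 + lamS) * (1 + ε) := by
    ring
  rw [hX]
  have hXpos : 0 ≤ 2 * ε * (1 + lamS) * (1 + ε) := by positivity
  have h2ε : (0:ℝ) ≤ 2 * ε := by linarith
  have hc : (0:ℝ) < 2 * (1 + ε) := by linarith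
  have hre : ε / (1 + ε) = (2 * ε) / (2 * (1 + ε)) := by
    field_simp
  constructor
  · rw [hre, div_lt_div_iff_of_pos_right hc, Real.lt_sqrt h2ε, lt_div_iff₀ hl]
    constructor
    · intro h; nlinarith
    · intro h; nlinarith
  · rw [hre, div_left_inj' hc.ne', Real.sqrt_eq_iff_eq_sq hXpos h2ε, eq_div_iff hl.ne']
    constructor
    · intro h; nlinarith
    · intro h; nlinarith
end

section
/- Fix λ_S ∈ [0,1). The function ε ↦ λ+(λ_S, ε) = (1+ε+ελ_S + sqrt(1+ε²(λ_S²−1)))/(2(1+ε)), defined for ε > 0 with 1+ε²(λ_S²−1) ≥ 0, is strictly decreasing in ε. -/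
lemma lamPlus_key (l e1 e2 a b : ℝ) (hl0 : 0 ≤ l) (hl1 : l < 1)
    (he1 : 0 < e1) (he12 : e1 < e2)
    (ha : 0 ≤ a) (hb : 0 ≤ b)
    (ha2 : a ^ 2 = 1 + e1 ^ 2 * (l ^ 2 - 1))
    (hb2 : b ^ 2 = 1 + e2 ^ 2 * (l ^ 2 - 1)) :
    l * (e2 - e1) + b * (1 + e1) < a * (1 + e2) := by
  have hl2 : l ^ 2 < 1 := by nlinarith
  have hba : b < a := by
    nlinarith [mul_pos (mul_pos (sub_pos.2 he12) (by linarith : (0:ℝ) < e1 + e2))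
      (by linarith : (0:ℝ) < 1 - l ^ 2), sq_nonneg (a + b)]
  have hab : 0 < a + b := by
    rcases hb.eq_or_lt with h | h
    · nlinarith
    · linarith
  rcases le_or_gt l a with h | h
  · nlinarith [mul_nonneg (mul_nonneg (sub_pos.2 he12).le (add_nonneg ha hb)) (sub_nonneg.2 h),
      mul_pos (mul_pos (sub_pos.2 he12) (by nlinarith : (0:ℝ) < (1+e1)*(e1+e2))) (by linarith : (0:ℝ) < 1 - l^2),
      hab]
  · have hlpos : 0 < l := lt_of_le_of_lt ha h
    have hsq : a ^ 2 < l ^ 2 := by nlinarith [mul_pos (sub_pos.2 h) (by linarith : (0:ℝ) < l + a)]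
    have he1sq : 1 < e1 ^ 2 := by nlinarith
    have he1' : 1 < e1 := by nlinarith
    nlinarith [mul_pos (sub_pos.2 he12) (mul_pos
        (by nlinarith [mul_pos (by linarith : (0:ℝ) < 1 + e1) (by linarith : (0:ℝ) < 1 + e2)] :
          (0:ℝ) < (1+e1)*(e1+e2) - (e1^2-1)) (by linarith : (0:ℝ) < 1 - l^2)),
      mul_pos (sub_pos.2 h) (sub_pos.2 hba), hab]

/-- for fixed `λ_S ∈ [0,1)`, `ε ↦ λ₊(λ_S, ε)` is strictly decreasing on the
set of positive `ε` with nonnegative discriminant. -/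
theorem lamPlus_strictAnti_in_eps (lamS : ℝ) (hlam : lamS ∈ Set.Ico (0 : ℝ) 1) :
    ∀ ε₁ > (0 : ℝ), ∀ ε₂ > (0 : ℝ),
      0 ≤ 1 + ε₁ ^ 2 * (lamS ^ 2 - 1) → 0 ≤ 1 + ε₂ ^ 2 * (lamS ^ 2 - 1) → ε₁ < ε₂ →
      (1 + ε₂ + ε₂ * lamS + Real.sqrt (1 + ε₂ ^ 2 * (lamS ^ 2 - 1))) / (2 * (1 + ε₂)) <
        (1 + ε₁ + ε₁ * lamS + Real.sqrt (1 + ε₁ ^ 2 * (lamS ^ 2 - 1))) / (2 * (1 + ε₁)) := by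
  obtain ⟨hl0, hl1⟩ := hlam
  intro ε₁ he1 ε₂ he2 hd1 hd2 h12
  set a := Real.sqrt (1 + ε₁ ^ 2 * (lamS ^ 2 - 1)) with hadef
  set b := Real.sqrt (1 + ε₂ ^ 2 * (lamS ^ 2 - 1)) with hbdef
  have ha : 0 ≤ a := Real.sqrt_nonneg _
  have hb : 0 ≤ b := Real.sqrt_nonneg _
  have ha2 : a ^ 2 = 1 + ε₁ ^ 2 * (lamS ^ 2 - 1) := Real.sq_sqrt hd1
  have hb2 : b ^ 2 = 1 + ε₂ ^ 2 * (lamS ^ 2 - 1) := Real.sq_sqrt hd2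
  have key := lamPlus_key lamS ε₁ ε₂ a b hl0 hl1 he1 h12 ha hb ha2 hb2
  rw [div_lt_div_iff₀ (by linarith) (by linarith)]
  nlinarith [key]
end

section
/- Fix λ_S ∈ [0,1) and let ε* = 1/sqrt(1 − λ_S²). Define ρ(ε, λ_S) piecewise: ρ = λ+(λ_S,ε) = (1+ε+ελ_S + sqrt(1+ε²(λ_S²−1)))/(2(1+ε)) when the discriminant is nonnegative, ρ = sqrt((1+ε+ελ_S)² − 1 − ε²(λ_S²−1))/(2(1+ε)) when the discriminant is negative and ε ≤ (1+λ_S)/(1−λ_S), and ρ = ε/(1+ε) when ε > (1+λ_S)/(1−λ_S). Then ρ(·, λ_S) attains its global minimum over ε > 0 at ε = ε*, with minimum value ρ* = (λ_S + 1 + sqrt(1−λ_S²)) / (2(1 + sqrt(1−λ_S²))). -/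
/-- the piecewise SLEM `ρ(·, λ_S)` attains its global minimum over `ε > 0`
at `ε* = 1/√(1-λ_S²)`, with minimum value `(λ_S + 1 + √(1-λ_S²)) / (2(1 + √(1-λ_S²)))`. -/
theorem slem_global_min (lamS : ℝ) (hlam : lamS ∈ Set.Ico (0 : ℝ) 1)
    (ρ : ℝ → ℝ)
    (hρ : ∀ ε : ℝ, ρ ε =
      if 0 ≤ 1 + ε ^ 2 * (lamS ^ 2 - 1) then
        (1 + ε + ε * lamS + Real.sqrt (1 + ε ^ 2 * (lamS ^ 2 - 1))) / (2 * (1 + ε))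
      else if ε ≤ (1 + lamS) / (1 - lamS) then
        Real.sqrt ((1 + ε + ε * lamS) ^ 2 - 1 - ε ^ 2 * (lamS ^ 2 - 1)) / (2 * (1 + ε))
      else ε / (1 + ε)) :
    (∀ ε > (0 : ℝ), ρ (1 / Real.sqrt (1 - lamS ^ 2)) ≤ ρ ε) ∧
      ρ (1 / Real.sqrt (1 - lamS ^ 2)) =
        (lamS + 1 + Real.sqrt (1 - lamS ^ 2)) / (2 * (1 + Real.sqrt (1 - lamS ^ 2))) := by
  obtain ⟨hl0, hl1⟩ := hlam
  have hq : (0:ℝ) < 1 - lamS ^ 2 := by nlinarith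
  set s := Real.sqrt (1 - lamS ^ 2) with hs
  have hs0 : 0 < s := Real.sqrt_pos.mpr hq
  have hs2 : s ^ 2 = 1 - lamS ^ 2 := Real.sq_sqrt hq.le
  have hs1 : s ≤ 1 := by nlinarith
  have hsne : s ≠ 0 := hs0.ne'
  have hval : ρ (1 / s) = (lamS + 1 + s) / (2 * (1 + s)) := by
    rw [hρ]
    have hz : 1 + (1 / s) ^ 2 * (lamS ^ 2 - 1) = 0 := by
      field_simp
      linarith [hs2]
    rw [if_pos hz.ge, hz, Real.sqrt_zero]
    rw [div_eq_div_iff (by positivity) (by positivity)]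
    field_simp
    ring
  refine ⟨fun ε hε => ?_, hval⟩
  rw [hval, hρ ε]
  have h1ε : (0:ℝ) < 1 + ε := by linarith
  have h1s : (0:ℝ) < 1 + s := by linarith
  split_ifs with h1 h2
  · -- disc ≥ 0 branch
    set a := Real.sqrt (1 + ε ^ 2 * (lamS ^ 2 - 1)) with ha
    have ha0 : 0 ≤ a := Real.sqrt_nonneg _
    have ha2 : a ^ 2 = 1 + ε ^ 2 * (lamS ^ 2 - 1) := Real.sq_sqrt h1
    have hes : ε * s ≤ 1 := by nlinarith [mul_pos hε hs0]
    have key : lamS * (1 - ε * s) ≤ (1 + s) * a := by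
      have hsq : (lamS * (1 - ε * s)) ^ 2 ≤ ((1 + s) * a) ^ 2 := by
        nlinarith [mul_pos hε hs0, sq_nonneg (1 - ε * s),
          mul_nonneg (sub_nonneg.mpr hes) (by positivity : (0:ℝ) ≤ 1 + ε * s),
          sq_nonneg lamS, sq_nonneg s]
      nlinarith [mul_nonneg hl0 (by linarith : (0:ℝ) ≤ 1 - ε * s),
        mul_nonneg h1s.le ha0]
    rw [div_le_div_iff₀ (by positivity) (by positivity)]
    nlinarith [key]
  · -- oscillatory branch
    push_neg at h1
    have heps1 : 1 ≤ ε * s := by nlinarith [mul_pos hε hs0]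
    have hBval : (1 + ε + ε * lamS) ^ 2 - 1 - ε ^ 2 * (lamS ^ 2 - 1)
        = 2 * (1 + lamS) * ε * (1 + ε) := by ring
    rw [hBval]
    set r := Real.sqrt (2 * (1 + lamS) * ε * (1 + ε)) with hr
    have hr0 : 0 ≤ r := Real.sqrt_nonneg _
    have hr2 : r ^ 2 = 2 * (1 + lamS) * ε * (1 + ε) := Real.sq_sqrt (by positivity)
    rw [div_le_div_iff₀ (by positivity) (by positivity)]
    have hL : ((lamS + 1 + s) * (2 * (1 + ε))) ^ 2
        = 8 * (1 + lamS) * (1 + s) * (1 + ε) ^ 2 := by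
      linear_combination (4 * (1 + ε) ^ 2) * hs2
    have hR : (r * (2 * (1 + s))) ^ 2
        = 8 * (1 + lamS) * ε * (1 + ε) * (1 + s) ^ 2 := by
      linear_combination (4 * (1 + s) ^ 2) * hr2
    have hprod : 0 ≤ 8 * (1 + lamS) * ((1 + s) * ((1 + ε) * (ε * s - 1))) := by
      have h8 : (0:ℝ) ≤ 8 * (1 + lamS) := by linarith
      exact mul_nonneg h8 (mul_nonneg h1s.le (mul_nonneg h1ε.le (by linarith)))
    have hsq : ((lamS + 1 + s) * (2 * (1 + ε))) ^ 2 ≤ (r * (2 * (1 + s))) ^ 2 := by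
      rw [hL, hR]; nlinarith [hprod]
    have hX : (0:ℝ) ≤ (lamS + 1 + s) * (2 * (1 + ε)) := by positivity
    have hY : (0:ℝ) ≤ r * (2 * (1 + s)) := by positivity
    exact (pow_le_pow_iff_left₀ hX hY two_ne_zero).mp hsq
  · -- overdamped branch
    push_neg at h2
    have hε3 : 1 + lamS < ε * (1 - lamS) := by
      rwa [div_lt_iff₀ (by linarith)] at h2
    have hε1 : 1 ≤ ε := by nlinarith
    rw [div_le_div_iff₀ (by positivity) (by positivity)]
    nlinarith [mul_nonneg hs0.le (sub_nonneg.mpr hε1), hε3, mul_nonneg hl0 hs0.le]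
end

section
/- The function ρ*(λ) = (λ + 1 + sqrt(1−λ²)) / (2(1 + sqrt(1−λ²))) for λ ∈ [0,1), extended by ρ*(λ) = 1/2 for λ ∈ [−1,0), is continuous and monotone increasing on [−1,1), satisfies ρ*(0) = 1/2, and ρ*(λ) → 1 as λ → 1⁻. -/
open Filter Topology

/-- the optimal SLEM `ρ*`, extended by `1/2` on `[-1,0)`, is continuous and
monotone increasing on `[-1,1)`, equals `1/2` at `0`, and tends to `1` as `λ → 1⁻`. -/
theorem rhoStar_props (ρStar : ℝ → ℝ)
    (hρ : ∀ lam : ℝ, ρStar lam =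
      if lam < 0 then 1 / 2
      else (lam + 1 + Real.sqrt (1 - lam ^ 2)) / (2 * (1 + Real.sqrt (1 - lam ^ 2)))) :
    ContinuousOn ρStar (Set.Ico (-1 : ℝ) 1) ∧
    MonotoneOn ρStar (Set.Ico (-1 : ℝ) 1) ∧
    ρStar 0 = 1 / 2 ∧
    Tendsto ρStar (𝓝[<] (1 : ℝ)) (𝓝 1) := by
  set g : ℝ → ℝ := fun lam => 1 / 2 + max lam 0 / (2 * (1 + Real.sqrt (1 - lam ^ 2))) with hg
  have key : ∀ lam : ℝ, ρStar lam = g lam := by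
    intro lam
    have hs : 0 ≤ Real.sqrt (1 - lam ^ 2) := Real.sqrt_nonneg _
    have hd : (0:ℝ) < 2 * (1 + Real.sqrt (1 - lam ^ 2)) := by positivity
    rw [hρ lam, hg]
    by_cases h : lam < 0
    · simp [h, max_eq_right h.le]
    · push_neg at h
      rw [if_neg (not_lt.mpr h)]
      simp only [max_eq_left h]
      field_simp
      ring
  have hfun : ρStar = g := funext key
  have hcont : Continuous g := by
    apply Continuous.add continuous_const
    apply Continuous.div (continuous_id.max continuous_const)
    · fun_prop
    · intro x
      have hs : 0 ≤ Real.sqrt (1 - x ^ 2) := Real.sqrt_nonneg _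
      positivity
  refine ⟨?_, ?_, ?_, ?_⟩
  · rw [hfun]; exact hcont.continuousOn
  · rw [hfun]
    intro a ha b hb hab
    simp only [hg]
    have hsb : 0 ≤ Real.sqrt (1 - b ^ 2) := Real.sqrt_nonneg _
    have hsa : 0 ≤ Real.sqrt (1 - a ^ 2) := Real.sqrt_nonneg _
    have hdb : (0:ℝ) < 2 * (1 + Real.sqrt (1 - b ^ 2)) := by positivity
    gcongr 1 / 2 + ?_
    by_cases h : a ≤ 0
    · rw [max_eq_right h, zero_div]
      positivity
    · push_neg at h
      rw [max_eq_left h.le, max_eq_left (h.le.trans hab)]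
      apply div_le_div₀ (h.trans_le hab).le hab hdb
      have : Real.sqrt (1 - b ^ 2) ≤ Real.sqrt (1 - a ^ 2) := by
        apply Real.sqrt_le_sqrt
        nlinarith
      linarith
  · rw [key 0]
    simp [hg]
  · rw [hfun]
    have h1 : g 1 = 1 := by
      simp only [hg]
      norm_num
    have := hcont.continuousAt (x := (1:ℝ))
    rw [ContinuousAt, h1] at this
    exact this.mono_left nhdsWithin_le_nhds
end

section
/- For λ ∈ [0,1), define ρ*(λ) = (λ + 1 + sqrt(1−λ²)) / (2(1 + sqrt(1−λ²))). Then ρ* is a convex function of λ on [0,1). -/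
noncomputable def rhoF : ℝ → ℝ := fun lam =>
  (lam + 1 + Real.sqrt (1 - lam ^ 2)) / (2 * (1 + Real.sqrt (1 - lam ^ 2)))

lemma rho_hasDerivAt {x : ℝ} (hx : x ∈ Set.Ioo (0:ℝ) 1) :
    HasDerivAt rhoF
      (1 / (2 * Real.sqrt (1 - x ^ 2) * (1 + Real.sqrt (1 - x ^ 2)))) x := by
  obtain ⟨h0, h1⟩ := hx
  have hu : (0:ℝ) < 1 - x ^ 2 := by nlinarith
  set s := Real.sqrt (1 - x ^ 2) with hs
  have hspos : 0 < s := Real.sqrt_pos.mpr hu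
  have hssq : s ^ 2 = 1 - x ^ 2 := Real.sq_sqrt hu.le
  have hinner : HasDerivAt (fun t : ℝ => 1 - t ^ 2) (-(2 * x)) x := by
    simpa using (hasDerivAt_pow 2 x).const_sub 1
  have hsd : HasDerivAt (fun t : ℝ => Real.sqrt (1 - t ^ 2))
      (1 / (2 * s) * (-(2 * x))) x :=
    (Real.hasDerivAt_sqrt hu.ne').comp x hinner
  have hn : HasDerivAt (fun t : ℝ => t + 1 + Real.sqrt (1 - t ^ 2))
      (1 + 1 / (2 * s) * (-(2 * x))) x := by
    exact ((hasDerivAt_id x).add_const 1).add hsd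
  have hd : HasDerivAt (fun t : ℝ => 2 * (1 + Real.sqrt (1 - t ^ 2)))
      (2 * (1 / (2 * s) * (-(2 * x)))) x := by
    simpa using (hsd.const_add 1).const_mul 2
  have hdne : 2 * (1 + s) ≠ 0 := by positivity
  have := hn.div hd hdne
  refine this.congr_deriv ?_
  symm
  rw [div_eq_div_iff (by positivity) (by positivity)]
  field_simp
  nlinarith [hssq, hspos, sq_nonneg (s - 1), sq_nonneg x]

/-- the optimal SLEM `ρ*` is convex on `[0,1)`. -/
theorem rhoStar_convexOn :
    ConvexOn ℝ (Set.Ico (0 : ℝ) 1)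
      (fun lam : ℝ =>
        (lam + 1 + Real.sqrt (1 - lam ^ 2)) / (2 * (1 + Real.sqrt (1 - lam ^ 2)))) := by
  have hint : interior (Set.Ico (0:ℝ) 1) = Set.Ioo 0 1 := interior_Ico
  have hcont : ContinuousOn rhoF (Set.Ico (0:ℝ) 1) := by
    apply ContinuousOn.div
    · fun_prop
    · fun_prop
    · intro x _
      have : 0 ≤ Real.sqrt (1 - x ^ 2) := Real.sqrt_nonneg _
      positivity
  have hdiff : DifferentiableOn ℝ rhoF (interior (Set.Ico (0:ℝ) 1)) := by
    rw [hint]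
    intro x hx
    exact (rho_hasDerivAt hx).differentiableAt.differentiableWithinAt
  have hmono : MonotoneOn (deriv rhoF) (interior (Set.Ico (0:ℝ) 1)) := by
    rw [hint]
    intro a ha b hb hab
    rw [(rho_hasDerivAt ha).deriv, (rho_hasDerivAt hb).deriv]
    have hua : (0:ℝ) < 1 - a ^ 2 := by nlinarith [ha.1, ha.2]
    have hub : (0:ℝ) < 1 - b ^ 2 := by nlinarith [hb.1, hb.2]
    have hsa : 0 < Real.sqrt (1 - a ^ 2) := Real.sqrt_pos.mpr hua
    have hsb : 0 < Real.sqrt (1 - b ^ 2) := Real.sqrt_pos.mpr hub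
    have hle : Real.sqrt (1 - b ^ 2) ≤ Real.sqrt (1 - a ^ 2) := by
      apply Real.sqrt_le_sqrt; nlinarith [ha.1]
    apply one_div_le_one_div_of_le (by positivity)
    nlinarith
  have := MonotoneOn.convexOn_of_deriv (convex_Ico (0:ℝ) 1) hcont hdiff hmono
  exact this
end

section
/- Fix λ ∈ [0,1) and n a natural number. Define g_n(λ) = γ(λ)·(ρ*(λ))^n with γ(λ) = 2·sqrt(1−λ²)/(1+λ+sqrt(1−λ²)) and ρ*(λ) = (λ+1+sqrt(1−λ²))/(2(1+sqrt(1−λ²))). Then the derivative of g_n with respect to λ is positive if and only if n > (λ+1)/sqrt(1−λ²). Consequently, if n > 2/sqrt(1−λ̃²) + 1 for some λ̃ ∈ [0,1), then g_n is strictly increasing on [0, λ̃]. -/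
lemma sqrt_hasDeriv {lam : ℝ} (h1 : -1 < lam) (h2 : lam < 1) :
    HasDerivAt (fun x : ℝ => Real.sqrt (1 - x ^ 2))
      (-lam / Real.sqrt (1 - lam ^ 2)) lam := by
  have hx : 0 < 1 - lam ^ 2 := by nlinarith
  have hs : 0 < Real.sqrt (1 - lam ^ 2) := Real.sqrt_pos.2 hx
  have h0 : HasDerivAt (fun x : ℝ => 1 - x ^ 2) (-(2 * lam)) lam := by
    simpa using ((hasDerivAt_pow 2 lam).const_sub 1)
  have h := (Real.hasDerivAt_sqrt (ne_of_gt hx)).comp lam h0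
  refine h.congr_deriv (Eq.symm ?_)
  field_simp

lemma gamma_hasDeriv {lam : ℝ} (h1 : -1 < lam) (h2 : lam < 1) :
    HasDerivAt (fun x : ℝ => 2 * Real.sqrt (1 - x ^ 2) / (1 + x + Real.sqrt (1 - x ^ 2)))
      (-2 * (lam + 1) /
        (Real.sqrt (1 - lam ^ 2) * (1 + lam + Real.sqrt (1 - lam ^ 2)) ^ 2)) lam := by
  have hx : 0 < 1 - lam ^ 2 := by nlinarith
  set s := Real.sqrt (1 - lam ^ 2) with hsdef
  have hs : 0 < s := Real.sqrt_pos.2 hx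
  have hs2 : s ^ 2 = 1 - lam ^ 2 := Real.sq_sqrt hx.le
  have hA : 0 < 1 + lam + s := by nlinarith
  have hds := sqrt_hasDeriv h1 h2
  have hnum : HasDerivAt (fun x : ℝ => 2 * Real.sqrt (1 - x ^ 2)) (2 * (-lam / s)) lam :=
    hds.const_mul 2
  have hden : HasDerivAt (fun x : ℝ => 1 + x + Real.sqrt (1 - x ^ 2)) (1 + -lam / s) lam := by
    exact (((hasDerivAt_id lam).const_add 1).add hds)
  have h := hnum.div hden (ne_of_gt hA)
  refine h.congr_deriv (Eq.symm ?_)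
  rw [← hsdef]
  field_simp
  linear_combination hs2


lemma rho_hasDeriv {lam : ℝ} (h1 : -1 < lam) (h2 : lam < 1) :
    HasDerivAt (fun x : ℝ => (x + 1 + Real.sqrt (1 - x ^ 2)) / (2 * (1 + Real.sqrt (1 - x ^ 2))))
      (1 / (2 * Real.sqrt (1 - lam ^ 2) * (1 + Real.sqrt (1 - lam ^ 2)))) lam := by
  have hx : 0 < 1 - lam ^ 2 := by nlinarith
  set s := Real.sqrt (1 - lam ^ 2) with hsdef
  have hs : 0 < s := Real.sqrt_pos.2 hx
  have hs2 : s ^ 2 = 1 - lam ^ 2 := Real.sq_sqrt hx.le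
  have hB : 0 < 1 + s := by nlinarith
  have hds := sqrt_hasDeriv h1 h2
  have hnum : HasDerivAt (fun x : ℝ => x + 1 + Real.sqrt (1 - x ^ 2)) (1 + -lam / s) lam := by
    exact (((hasDerivAt_id lam).add_const 1).add hds)
  have hden : HasDerivAt (fun x : ℝ => 2 * (1 + Real.sqrt (1 - x ^ 2))) (2 * (-lam / s)) lam :=
    (hds.const_add 1).const_mul 2
  have h := hnum.div hden (by positivity)
  refine h.congr_deriv (Eq.symm ?_)
  rw [← hsdef]
  field_simp
  linear_combination (-1) * hs2

lemma g_hasDeriv (n : ℕ) {lam : ℝ} (h1 : -1 < lam) (h2 : lam < 1) :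
    HasDerivAt (fun x : ℝ =>
        2 * Real.sqrt (1 - x ^ 2) / (1 + x + Real.sqrt (1 - x ^ 2)) *
          ((x + 1 + Real.sqrt (1 - x ^ 2)) / (2 * (1 + Real.sqrt (1 - x ^ 2)))) ^ n)
      (2 * Real.sqrt (1 - lam ^ 2) / (1 + lam + Real.sqrt (1 - lam ^ 2)) *
          ((lam + 1 + Real.sqrt (1 - lam ^ 2)) / (2 * (1 + Real.sqrt (1 - lam ^ 2)))) ^ n *
        ((n : ℝ) * Real.sqrt (1 - lam ^ 2) - (lam + 1)) /
        ((1 - lam ^ 2) * (1 + lam + Real.sqrt (1 - lam ^ 2)))) lam := by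
  have hx : 0 < 1 - lam ^ 2 := by nlinarith
  set s := Real.sqrt (1 - lam ^ 2) with hsdef
  have hs : 0 < s := Real.sqrt_pos.2 hx
  have hs2 : s ^ 2 = 1 - lam ^ 2 := Real.sq_sqrt hx.le
  have hA : 0 < 1 + lam + s := by nlinarith
  have hB : 0 < 1 + s := by nlinarith
  have h := (gamma_hasDeriv h1 h2).mul ((rho_hasDeriv h1 h2).pow n)
  refine h.congr_deriv (Eq.symm ?_)
  rw [← hsdef]
  conv_lhs => rw [← hs2]
  rcases n with _ | m
  · simp
    field_simp
    ring
  · simp only [Nat.succ_sub_one, Pi.pow_apply]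
    rw [← hsdef]
    simp only [pow_succ]
    push_cast
    field_simp
    ring_nf

/-- for `g_n(λ) = γ(λ)·(ρ*(λ))^n` on `[0,1)`, the derivative of `g_n` is
positive iff `n > (λ+1)/√(1-λ²)`; consequently, if `n > 2/√(1-λ̃²) + 1` then `g_n` is
strictly increasing on `[0, λ̃]`. -/
theorem gn_deriv_pos_iff (n : ℕ) (γ ρStar g : ℝ → ℝ)
    (hγ : ∀ lam : ℝ, γ lam =
      2 * Real.sqrt (1 - lam ^ 2) / (1 + lam + Real.sqrt (1 - lam ^ 2)))
    (hρ : ∀ lam : ℝ, ρStar lam =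
      (lam + 1 + Real.sqrt (1 - lam ^ 2)) / (2 * (1 + Real.sqrt (1 - lam ^ 2))))
    (hg : ∀ lam : ℝ, g lam = γ lam * (ρStar lam) ^ n) :
    (∀ lam ∈ Set.Ico (0 : ℝ) 1,
        0 < deriv g lam ↔ (lam + 1) / Real.sqrt (1 - lam ^ 2) < (n : ℝ)) ∧
    (∀ lamT ∈ Set.Ico (0 : ℝ) 1,
        2 / Real.sqrt (1 - lamT ^ 2) + 1 < (n : ℝ) →
        StrictMonoOn g (Set.Icc 0 lamT)) := by
  have hgf : g = fun x : ℝ =>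
      2 * Real.sqrt (1 - x ^ 2) / (1 + x + Real.sqrt (1 - x ^ 2)) *
        ((x + 1 + Real.sqrt (1 - x ^ 2)) / (2 * (1 + Real.sqrt (1 - x ^ 2)))) ^ n := by
    funext x; rw [hg, hγ, hρ]
  constructor
  · rintro lam ⟨hl0, hl1⟩
    have h1 : (-1 : ℝ) < lam := by linarith
    have hx : (0 : ℝ) < 1 - lam ^ 2 := by nlinarith
    have hd := g_hasDeriv n h1 hl1
    rw [hgf, hd.deriv]
    have hs : 0 < Real.sqrt (1 - lam ^ 2) := Real.sqrt_pos.2 hx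
    have hA : 0 < 1 + lam + Real.sqrt (1 - lam ^ 2) := by nlinarith
    have hP : 0 < 2 * Real.sqrt (1 - lam ^ 2) / (1 + lam + Real.sqrt (1 - lam ^ 2)) *
        ((lam + 1 + Real.sqrt (1 - lam ^ 2)) / (2 * (1 + Real.sqrt (1 - lam ^ 2)))) ^ n := by
      have := Real.sqrt_nonneg (1 - lam ^ 2)
      exact mul_pos (div_pos (by linarith) hA)
        (pow_pos (div_pos (by linarith) (by linarith)) n)
    have hC : 0 < (1 - lam ^ 2) * (1 + lam + Real.sqrt (1 - lam ^ 2)) := mul_pos hx hA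
    have e : 2 * Real.sqrt (1 - lam ^ 2) / (1 + lam + Real.sqrt (1 - lam ^ 2)) *
          ((lam + 1 + Real.sqrt (1 - lam ^ 2)) / (2 * (1 + Real.sqrt (1 - lam ^ 2)))) ^ n *
          ((n : ℝ) * Real.sqrt (1 - lam ^ 2) - (lam + 1)) /
          ((1 - lam ^ 2) * (1 + lam + Real.sqrt (1 - lam ^ 2))) =
        (2 * Real.sqrt (1 - lam ^ 2) / (1 + lam + Real.sqrt (1 - lam ^ 2)) *
            ((lam + 1 + Real.sqrt (1 - lam ^ 2)) / (2 * (1 + Real.sqrt (1 - lam ^ 2)))) ^ n /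
          ((1 - lam ^ 2) * (1 + lam + Real.sqrt (1 - lam ^ 2)))) *
          ((n : ℝ) * Real.sqrt (1 - lam ^ 2) - (lam + 1)) := by ring
    rw [e, mul_pos_iff_of_pos_left (div_pos hP hC), sub_pos]
    exact (div_lt_iff₀ hs).symm
  · rintro lamT ⟨hT0, hT1⟩ hn
    rw [hgf]
    have hsT : 0 < Real.sqrt (1 - lamT ^ 2) := Real.sqrt_pos.2 (by nlinarith)
    have h2lt : 2 < ((n : ℝ) - 1) * Real.sqrt (1 - lamT ^ 2) := by
      have : 2 / Real.sqrt (1 - lamT ^ 2) < (n : ℝ) - 1 := by linarith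
      exact (div_lt_iff₀ hsT).mp this
    have hn1 : 0 < (n : ℝ) - 1 := by nlinarith
    apply strictMonoOn_of_deriv_pos (convex_Icc 0 lamT)
    · intro x hx
      obtain ⟨hx0, hxT⟩ := hx
      exact (g_hasDeriv n (by linarith) (by linarith)).continuousAt.continuousWithinAt
    · intro x hx
      rw [interior_Icc] at hx
      obtain ⟨hx0, hxT⟩ := hx
      have hx1 : x < 1 := by linarith
      have hm1 : (-1 : ℝ) < x := by linarith
      have hxx : (0 : ℝ) < 1 - x ^ 2 := by nlinarith
      have hd := g_hasDeriv n hm1 hx1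
      rw [hd.deriv]
      have hsx : 0 < Real.sqrt (1 - x ^ 2) := Real.sqrt_pos.2 hxx
      have hTx : Real.sqrt (1 - lamT ^ 2) ≤ Real.sqrt (1 - x ^ 2) :=
        Real.sqrt_le_sqrt (by nlinarith)
      have hX : 0 < (n : ℝ) * Real.sqrt (1 - x ^ 2) - (x + 1) := by nlinarith
      have hAx : 0 < 1 + x + Real.sqrt (1 - x ^ 2) := by nlinarith
      have hP : 0 < 2 * Real.sqrt (1 - x ^ 2) / (1 + x + Real.sqrt (1 - x ^ 2)) *
          ((x + 1 + Real.sqrt (1 - x ^ 2)) / (2 * (1 + Real.sqrt (1 - x ^ 2)))) ^ n := by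
        exact mul_pos (div_pos (by linarith) hAx)
          (pow_pos (div_pos (by linarith) (by linarith)) n)
      exact div_pos (mul_pos hP hX) (mul_pos hxx hAx)
end
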